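/- Let a be a nonzero real number and c a real constant. Define u₀(x,t) = 4 arctan(exp(a x + t/a)) and u₁(x,t) = 2c · exp(a x + t/a)/(exp(2a x + 2t/a) + 1). Then (u₀, u₁) is a solution of the Z₂-Sine-Gordon equation: ∂_t∂_x u₀ = sin u₀ and ∂_t∂_x u₁ = u₁ cos u₀ for all (x,t) ∈ ℝ². -/

import Mathlib

open Real

private lemma sqrt_sq_one_add (y : ℝ) : (Real.sqrt (1 + y ^ 2)) ^ 2 = 1 + y ^ 2 :=
  Real.sq_sqrt (by positivity)

private lemma sin_four_arctan (y : ℝ) :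
    Real.sin (4 * Real.arctan y) = 4 * y * (1 - y ^ 2) / (1 + y ^ 2) ^ 2 := by
  have h4 : 4 * Real.arctan y = 2 * (2 * Real.arctan y) := by ring
  have hs : Real.sqrt (1 + y ^ 2) ≠ 0 := by positivity
  have hsq := sqrt_sq_one_add y
  have hne : (1 : ℝ) + y ^ 2 ≠ 0 := by positivity
  rw [h4, Real.sin_two_mul, Real.cos_two_mul, Real.sin_two_mul, Real.sin_arctan,
    Real.cos_arctan]
  field_simp
  rw [show √(1 + y ^ 2) ^ 4 = (√(1 + y ^ 2) ^ 2) ^ 2 by ring, hsq]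
  ring

private lemma cos_four_arctan (y : ℝ) :
    Real.cos (4 * Real.arctan y) = (1 - 6 * y ^ 2 + y ^ 4) / (1 + y ^ 2) ^ 2 := by
  have h4 : 4 * Real.arctan y = 2 * (2 * Real.arctan y) := by ring
  have hs : Real.sqrt (1 + y ^ 2) ≠ 0 := by positivity
  have hsq := sqrt_sq_one_add y
  have hne : (1 : ℝ) + y ^ 2 ≠ 0 := by positivity
  rw [h4, Real.cos_two_mul, Real.cos_two_mul, Real.cos_arctan]
  field_simp
  rw [show √(1 + y ^ 2) ^ 4 = (√(1 + y ^ 2) ^ 2) ^ 2 by ring, hsq]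
  ring

private lemma hasDerivAt_E_x (a t x : ℝ) :
    HasDerivAt (fun x' : ℝ => Real.exp (a * x' + t / a))
      (Real.exp (a * x + t / a) * a) x := by
  have h : HasDerivAt (fun x' : ℝ => a * x' + t / a) a x := by
    simpa using ((hasDerivAt_id x).const_mul a).add_const (t / a)
  simpa using h.exp

private lemma hasDerivAt_E_t (a x t : ℝ) :
    HasDerivAt (fun t' : ℝ => Real.exp (a * x + t' / a))
      (Real.exp (a * x + t / a) * (1 / a)) t := by
  have h : HasDerivAt (fun t' : ℝ => a * x + t' / a) (1 / a) t := by
    simpa using ((hasDerivAt_id t).div_const a).const_add (a * x)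
  simpa using h.exp

theorem Z2_sineGordon_explicit_solution (a : ℝ) (ha : a ≠ 0) (c : ℝ)
    (u₀ u₁ : ℝ → ℝ → ℝ)
    (hdef₀ : ∀ x t, u₀ x t = 4 * Real.arctan (Real.exp (a * x + t / a)))
    (hdef₁ : ∀ x t, u₁ x t
      = 2 * c * Real.exp (a * x + t / a) / (Real.exp (2 * a * x + 2 * t / a) + 1)) :
    (∀ x t, deriv (fun t' => deriv (fun x' => u₀ x' t') x) t = Real.sin (u₀ x t)) ∧
    (∀ x t, deriv (fun t' => deriv (fun x' => u₁ x' t') x) t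
        = u₁ x t * Real.cos (u₀ x t)) := by
  -- rewrite u₁ in terms of E = exp (a x + t/a)
  have hdef₁' : ∀ x t, u₁ x t
      = 2 * c * Real.exp (a * x + t / a) / (Real.exp (a * x + t / a) ^ 2 + 1) := by
    intro x t
    have h2 : Real.exp (2 * a * x + 2 * t / a) = Real.exp (a * x + t / a) ^ 2 := by
      rw [pow_two, ← Real.exp_add]; congr 1; ring
    rw [hdef₁, h2]
  have hEpos : ∀ s : ℝ, (0:ℝ) < Real.exp s ^ 2 + 1 := fun s => by positivity
  -- inner x-derivative of u₀
  have hinner₀ : ∀ x t, deriv (fun x' => u₀ x' t) x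
      = 4 * a * Real.exp (a * x + t / a) / (Real.exp (a * x + t / a) ^ 2 + 1) := by
    intro x t
    have hfun : (fun x' => u₀ x' t)
        = fun x' => 4 * Real.arctan (Real.exp (a * x' + t / a)) := by
      funext x'; exact hdef₀ x' t
    rw [hfun]
    have h : HasDerivAt (fun x' => 4 * Real.arctan (Real.exp (a * x' + t / a)))
        (4 * (1 / (1 + Real.exp (a * x + t / a) ^ 2) * (Real.exp (a * x + t / a) * a))) x :=
      ((hasDerivAt_E_x a t x).arctan).const_mul 4
    rw [h.deriv]
    have hp := Real.exp_pos (a * x + t / a)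
    set E := Real.exp (a * x + t / a) with hEdef
    clear_value E
    have h1 : (1:ℝ) + E ^ 2 ≠ 0 := by positivity
    have h2 : E ^ 2 + 1 ≠ 0 := by positivity
    field_simp
    ring
  -- inner x-derivative of u₁
  have hinner₁ : ∀ x t, deriv (fun x' => u₁ x' t) x
      = 2 * c * a * (Real.exp (a * x + t / a) - Real.exp (a * x + t / a) ^ 3)
        / (Real.exp (a * x + t / a) ^ 2 + 1) ^ 2 := by
    intro x t
    have hfun : (fun x' => u₁ x' t)
        = fun x' => 2 * c * Real.exp (a * x' + t / a)
            / (Real.exp (a * x' + t / a) ^ 2 + 1) := by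
      funext x'; exact hdef₁' x' t
    rw [hfun]
    have hN : HasDerivAt (fun x' => 2 * c * Real.exp (a * x' + t / a))
        (2 * c * (Real.exp (a * x + t / a) * a)) x := (hasDerivAt_E_x a t x).const_mul (2 * c)
    have hD : HasDerivAt (fun x' => Real.exp (a * x' + t / a) ^ 2 + 1)
        (2 * Real.exp (a * x + t / a) ^ 1 * (Real.exp (a * x + t / a) * a)) x := by
      simpa using ((hasDerivAt_E_x a t x).pow 2).add_const 1
    have hDne : Real.exp (a * x + t / a) ^ 2 + 1 ≠ 0 := (hEpos _).ne'
    have h := hN.fun_div hD hDne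
    rw [h.deriv]
    have hp := Real.exp_pos (a * x + t / a)
    set E := Real.exp (a * x + t / a) with hEdef
    clear_value E
    have h2 : E ^ 2 + 1 ≠ 0 := by positivity
    field_simp
    ring
  constructor
  · intro x t
    have hfun : (fun t' => deriv (fun x' => u₀ x' t') x)
        = fun t' => 4 * a * Real.exp (a * x + t' / a)
            / (Real.exp (a * x + t' / a) ^ 2 + 1) := by
      funext t'; exact hinner₀ x t'
    rw [hfun, hdef₀]
    have hN : HasDerivAt (fun t' => 4 * a * Real.exp (a * x + t' / a))
        (4 * a * (Real.exp (a * x + t / a) * (1 / a))) t :=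
      (hasDerivAt_E_t a x t).const_mul (4 * a)
    have hD : HasDerivAt (fun t' => Real.exp (a * x + t' / a) ^ 2 + 1)
        (2 * Real.exp (a * x + t / a) ^ 1 * (Real.exp (a * x + t / a) * (1 / a))) t := by
      simpa using ((hasDerivAt_E_t a x t).pow 2).add_const 1
    have hDne : Real.exp (a * x + t / a) ^ 2 + 1 ≠ 0 := (hEpos _).ne'
    have h := hN.fun_div hD hDne
    rw [h.deriv, sin_four_arctan]
    have hp := Real.exp_pos (a * x + t / a)
    set E := Real.exp (a * x + t / a) with hEdef
    clear_value E
    have h1 : (1:ℝ) + E ^ 2 ≠ 0 := by positivity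
    have h2 : E ^ 2 + 1 ≠ 0 := by positivity
    field_simp
    ring
  · intro x t
    have hfun : (fun t' => deriv (fun x' => u₁ x' t') x)
        = fun t' => 2 * c * a * (Real.exp (a * x + t' / a)
              - Real.exp (a * x + t' / a) ^ 3)
            / (Real.exp (a * x + t' / a) ^ 2 + 1) ^ 2 := by
      funext t'; exact hinner₁ x t'
    rw [hfun, hdef₀, hdef₁']
    have hEt := hasDerivAt_E_t a x t
    have hN : HasDerivAt (fun t' => 2 * c * a * (Real.exp (a * x + t' / a)
          - Real.exp (a * x + t' / a) ^ 3))
        (2 * c * a * (Real.exp (a * x + t / a) * (1 / a)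
          - 3 * Real.exp (a * x + t / a) ^ 2 * (Real.exp (a * x + t / a) * (1 / a)))) t := by
      simpa using (hEt.sub (hEt.pow 3)).const_mul (2 * c * a)
    have hD : HasDerivAt (fun t' => (Real.exp (a * x + t' / a) ^ 2 + 1) ^ 2)
        (2 * (Real.exp (a * x + t / a) ^ 2 + 1) ^ 1
          * (2 * Real.exp (a * x + t / a) ^ 1 * (Real.exp (a * x + t / a) * (1 / a)))) t := by
      simpa using (((hasDerivAt_E_t a x t).pow 2).add_const 1).fun_pow 2
    have hDne : (Real.exp (a * x + t / a) ^ 2 + 1) ^ 2 ≠ 0 :=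
      pow_ne_zero _ (hEpos _).ne'
    have h := hN.fun_div hD hDne
    rw [h.deriv, cos_four_arctan]
    have hp := Real.exp_pos (a * x + t / a)
    set E := Real.exp (a * x + t / a) with hEdef
    clear_value E
    have h1 : (1:ℝ) + E ^ 2 ≠ 0 := by positivity
    have h2 : E ^ 2 + 1 ≠ 0 := by positivity
    field_simp
    ring
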